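/- With the same notation as the size estimate: for K_N^α(s) = (1/(4^α Γ(α))) Σ_{j=N₁}^{N₂} v_j (a_{j+1}^{2α} e^{-a_{j+1}²/(4s)} − a_j^{2α} e^{-a_j²/(4s)}) / s^{1+α}, the derivative satisfies |∂_s K_N^α(s)| ≤ C/s² for all s > 0, with C depending only on α and sup_j |v_j|, uniformly in N. -/

import Mathlib

open Real MeasureTheory Finset Set

noncomputable def Mq (q : ℝ) : ℝ := 4 ^ ((q+1)/2) * (1/2) * Real.Gamma ((q+1)/2)

lemma Mq_pos {q : ℝ} (hq : -1 < q) : 0 < Mq q := by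
  have h : 0 < (q+1)/2 := by linarith
  have := Real.Gamma_pos_of_pos h
  have h4 : (0:ℝ) < (4:ℝ) ^ ((q+1)/2) := Real.rpow_pos_of_pos (by norm_num) _
  unfold Mq; positivity

lemma moment_integrable (q s : ℝ) (hq : -1 < q) (hs : 0 < s) :
    IntegrableOn (fun x : ℝ => x ^ q * Real.exp (-x^2/(4*s))) (Ioi (0:ℝ)) := by
  have h := integrableOn_rpow_mul_exp_neg_mul_sq (b := 1/(4*s)) (by positivity) hq
  refine h.congr_fun (fun x _ => ?_) measurableSet_Ioi
  congr 1
  ring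

lemma moment_eq (q s : ℝ) (hq : -1 < q) (hs : 0 < s) :
    ∫ x in Ioi (0:ℝ), x ^ q * Real.exp (-x^2/(4*s)) = Mq q * s ^ ((q+1)/2) := by
  have h2 : (0:ℝ) < 2 := by norm_num
  have key := integral_rpow_mul_exp_neg_mul_rpow (p := 2) (q := q) (b := 1/(4*s)) h2 hq
    (by positivity)
  have hcongr : ∫ x in Ioi (0:ℝ), x ^ q * Real.exp (-x^2/(4*s))
      = ∫ x in Ioi (0:ℝ), x ^ q * Real.exp (-(1/(4*s)) * x ^ (2:ℝ)) := by
    refine setIntegral_congr_fun measurableSet_Ioi (fun x hx => ?_)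
    congr 2
    rw [show (2:ℝ) = ((2:ℕ):ℝ) by norm_num, Real.rpow_natCast]
    ring
  rw [hcongr, key]
  rw [neg_div, Real.rpow_neg (by positivity), one_div, Real.inv_rpow (by positivity), inv_inv,
    Real.mul_rpow (by norm_num) hs.le, Mq]
  ring

noncomputable def psiD (p s : ℝ) : ℝ → ℝ := fun x =>
  p * x ^ (p-1) * Real.exp (-x^2/(4*s)) + x ^ p * (Real.exp (-x^2/(4*s)) * (-(2*x^1)/(4*s)))

lemma hasDerivAt_psi (p s : ℝ) {x : ℝ} (hx : 0 < x) :
    HasDerivAt (fun y : ℝ => y ^ p * Real.exp (-y^2/(4*s))) (psiD p s x) x := by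
  have h1 : HasDerivAt (fun y : ℝ => y ^ p) (p * x ^ (p-1)) x :=
    Real.hasDerivAt_rpow_const (Or.inl hx.ne')
  have h2 : HasDerivAt (fun y : ℝ => -y^2/(4*s)) (-(2*x^1)/(4*s)) x :=
    ((hasDerivAt_pow 2 x).neg).div_const (4*s)
  exact h1.mul h2.exp

lemma psiD_integrable (p s : ℝ) (hp : 0 < p) (hs : 0 < s) :
    IntegrableOn (psiD p s) (Ioi (0:ℝ)) := by
  have h1 : IntegrableOn (fun x : ℝ => x ^ (p-1) * Real.exp (-x^2/(4*s))) (Ioi (0:ℝ)) := by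
    have h := integrableOn_rpow_mul_exp_neg_mul_sq (b := 1/(4*s)) (by positivity)
      (show (-1:ℝ) < p-1 by linarith)
    exact h.congr_fun (fun x _ => by congr 1; ring) measurableSet_Ioi
  have h2 : IntegrableOn (fun x : ℝ => x ^ (p+1) * Real.exp (-x^2/(4*s))) (Ioi (0:ℝ)) := by
    have h := integrableOn_rpow_mul_exp_neg_mul_sq (b := 1/(4*s)) (by positivity)
      (show (-1:ℝ) < p+1 by linarith)
    exact h.congr_fun (fun x _ => by congr 1; ring) measurableSet_Ioi
  have h3 : IntegrableOn (fun x : ℝ => p * (x ^ (p-1) * Real.exp (-x^2/(4*s)))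
      - (1/(2*s)) * (x ^ (p+1) * Real.exp (-x^2/(4*s)))) (Ioi (0:ℝ)) :=
    (h1.const_mul p).sub (h2.const_mul (1/(2*s)))
  refine h3.congr_fun (fun x hx => ?_) measurableSet_Ioi
  have hx0 : (0:ℝ) < x := hx
  unfold psiD
  beta_reduce
  rw [Real.rpow_add_one hx0.ne']
  field_simp
  ring

lemma abs_psiD_le (p s : ℝ) (hs : 0 < s) {x : ℝ} (hx : 0 < x) :
    |psiD p s x| ≤ |p| * (x ^ (p-1) * Real.exp (-x^2/(4*s)))
      + (1/(2*s)) * (x ^ (p+1) * Real.exp (-x^2/(4*s))) := by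
  unfold psiD
  refine (abs_add_le _ _).trans ?_
  have he : 0 < Real.exp (-x^2/(4*s)) := Real.exp_pos _
  have hxp : (0:ℝ) < x ^ (p-1) := Real.rpow_pos_of_pos hx _
  have hxp2 : (0:ℝ) < x ^ p := Real.rpow_pos_of_pos hx _
  gcongr
  · rw [abs_mul, abs_mul, abs_of_pos hxp, abs_of_pos he]
    exact le_of_eq (by ring)
  · rw [abs_mul, abs_of_pos hxp2, abs_mul, abs_of_pos he, abs_div, abs_neg, pow_one,
      abs_of_pos (by positivity : (0:ℝ) < 2*x), abs_of_pos (by positivity : (0:ℝ) < 4*s),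
      Real.rpow_add_one hx.ne']
    refine le_of_eq ?_
    field_simp
    ring

lemma var_bound (p s : ℝ) (hp : 0 < p) (hs : 0 < s) (a : ℤ → ℝ) (ha : ∀ j, 0 < a j)
    (hmono : StrictMono a) (N₁ N₂ : ℤ) :
    ∑ j ∈ Finset.Icc N₁ N₂,
      |a (j+1) ^ p * Real.exp (-a (j+1)^2/(4*s)) - a j ^ p * Real.exp (-a j^2/(4*s))|
      ≤ (p * Mq (p-1) + Mq (p+1) / 2) * s ^ (p/2) := by
  have habs : IntegrableOn (fun x => |psiD p s x|) (Ioi (0:ℝ)) := (psiD_integrable p s hp hs).abs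
  -- Step 1: each term bounded by integral over Ioc
  have step1 : ∀ j : ℤ, |a (j+1) ^ p * Real.exp (-a (j+1)^2/(4*s))
      - a j ^ p * Real.exp (-a j^2/(4*s))|
      ≤ ∫ x in Ioc (a j) (a (j+1)), |psiD p s x| := by
    intro j
    have hle : a j ≤ a (j+1) := (hmono (lt_add_one j)).le
    have hsub : Ioc (a j) (a (j+1)) ⊆ Ioi (0:ℝ) := fun x hx => lt_trans (ha j) hx.1
    have hii : IntervalIntegrable (psiD p s) volume (a j) (a (j+1)) := by
      rw [intervalIntegrable_iff_integrableOn_Ioc_of_le hle]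
      exact (psiD_integrable p s hp hs).mono_set hsub
    have hftc : ∫ x in (a j)..(a (j+1)), psiD p s x
        = a (j+1) ^ p * Real.exp (-a (j+1)^2/(4*s)) - a j ^ p * Real.exp (-a j^2/(4*s)) := by
      refine intervalIntegral.integral_eq_sub_of_hasDerivAt
        (f := fun y : ℝ => y ^ p * Real.exp (-y^2/(4*s))) (fun x hx => ?_) hii
      refine hasDerivAt_psi p s ?_
      rw [Set.uIcc_of_le hle] at hx
      exact lt_of_lt_of_le (ha j) hx.1
    rw [← hftc]
    calc |∫ x in (a j)..(a (j+1)), psiD p s x| ≤ ∫ x in (a j)..(a (j+1)), |psiD p s x| :=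
        intervalIntegral.abs_integral_le_integral_abs hle
      _ = _ := intervalIntegral.integral_of_le hle
  -- Step 2: sum of integrals over disjoint Iocs bounded by integral over Ioi 0
  have step2 : ∑ j ∈ Finset.Icc N₁ N₂, ∫ x in Ioc (a j) (a (j+1)), |psiD p s x|
      ≤ ∫ x in Ioi (0:ℝ), |psiD p s x| := by
    rw [← integral_biUnion_finset (Finset.Icc N₁ N₂)
      (fun i _ => measurableSet_Ioc)
      (by
        intro i _ k _ hik
        rcases lt_or_gt_of_ne hik with h | h
        · refine Set.Ioc_disjoint_Ioc.2 ?_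
          exact le_trans (min_le_left _ _) (le_max_of_le_right (hmono.le_iff_le.2 (by omega)))
        · refine Set.Ioc_disjoint_Ioc.2 ?_
          exact le_trans (min_le_right _ _) (le_max_of_le_left (hmono.le_iff_le.2 (by omega))))
      (fun i _ => habs.mono_set (fun x hx => lt_trans (ha i) hx.1))]
    refine setIntegral_mono_set habs ?_ ?_
    · filter_upwards with x using abs_nonneg _
    · refine HasSubset.Subset.eventuallyLE ?_
      intro x hx
      simp only [Set.mem_iUnion] at hx
      obtain ⟨i, _, hxi⟩ := hx
      exact lt_trans (ha i) hxi.1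
  -- Step 3: integral of |psiD| bounded by moments
  have step3 : ∫ x in Ioi (0:ℝ), |psiD p s x| ≤ (p * Mq (p-1) + Mq (p+1) / 2) * s ^ (p/2) := by
    have hmom1 := moment_eq (p-1) s (by linarith) hs
    have hmom2 := moment_eq (p+1) s (by linarith) hs
    have hbound : ∫ x in Ioi (0:ℝ), |psiD p s x|
        ≤ ∫ x in Ioi (0:ℝ), (|p| * (x ^ (p-1) * Real.exp (-x^2/(4*s)))
          + (1/(2*s)) * (x ^ (p+1) * Real.exp (-x^2/(4*s)))) := by
      refine setIntegral_mono_on habs ?_ measurableSet_Ioi (fun x hx => abs_psiD_le p s hs hx)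
      exact ((moment_integrable (p-1) s (by linarith) hs).const_mul _).add
        ((moment_integrable (p+1) s (by linarith) hs).const_mul _)
    refine hbound.trans ?_
    rw [integral_add ((moment_integrable (p-1) s (by linarith) hs).const_mul _)
      ((moment_integrable (p+1) s (by linarith) hs).const_mul _),
      integral_const_mul, integral_const_mul, hmom1, hmom2,
      abs_of_pos hp]
    have e1 : (p-1+1)/2 = p/2 := by ring
    have e2 : s ^ ((p+1+1)/2) = s * s ^ (p/2) := by
      rw [show (p+1+1)/2 = 1 + p/2 by ring, Real.rpow_add hs, Real.rpow_one]
    rw [e1, e2]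
    have h2 : 1/(2*s) * (Mq (p+1) * (s * s ^ (p/2))) = Mq (p+1)/2 * s ^ (p/2) := by
      field_simp
    rw [h2]
    ring_nf
    exact le_refl _
  calc ∑ j ∈ Finset.Icc N₁ N₂, _ ≤ ∑ j ∈ Finset.Icc N₁ N₂, ∫ x in Ioc (a j) (a (j+1)), |psiD p s x| :=
        Finset.sum_le_sum (fun j _ => step1 j)
    _ ≤ _ := step2.trans step3

lemma hasDerivAt_expInv (B s : ℝ) (hs : 0 < s) :
    HasDerivAt (fun t : ℝ => Real.exp (-B/(4*t))) (Real.exp (-B/(4*s)) * (B/(4*s^2))) s := by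
  have h0 : HasDerivAt (fun t : ℝ => t⁻¹) (-(s^2)⁻¹) s := hasDerivAt_inv hs.ne'
  have h1 := h0.const_mul (-B/4)
  have hfun : (fun t : ℝ => -B/4 * t⁻¹) = fun t : ℝ => -B/(4*t) := by
    funext t
    rw [div_eq_mul_inv (-B) (4*t), mul_inv]
    ring
  rw [hfun] at h1
  have h2 := h1.exp
  convert h2 using 1
  field_simp

lemma hasDerivAt_term (α v c1 c0 B1 B0 s : ℝ) (hs : 0 < s) :
    HasDerivAt
      (fun t : ℝ => v * (c1 * Real.exp (-B1/(4*t)) - c0 * Real.exp (-B0/(4*t))) / t ^ (1+α))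
      ((v * (c1 * (Real.exp (-B1/(4*s)) * (B1/(4*s^2)))
            - c0 * (Real.exp (-B0/(4*s)) * (B0/(4*s^2)))) * s ^ (1+α)
        - v * (c1 * Real.exp (-B1/(4*s)) - c0 * Real.exp (-B0/(4*s))) * ((1+α) * s ^ α))
        / (s ^ (1+α))^2) s := by
  have h1 := (hasDerivAt_expInv B1 s hs).const_mul c1
  have h0 := (hasDerivAt_expInv B0 s hs).const_mul c0
  have hnum := (h1.sub h0).const_mul v
  have hden : HasDerivAt (fun t : ℝ => t ^ (1+α)) ((1+α) * s ^ α) s := by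
    have h := Real.hasDerivAt_rpow_const (x := s) (p := 1+α) (Or.inl hs.ne')
    rwa [show 1+α-1 = α by ring] at h
  exact hnum.div hden (by positivity)

lemma pow_merge {x : ℝ} (hx : 0 < x) (α : ℝ) : x ^ (2*α) * x^2 = x ^ (2*α+2) := by
  rw [← Real.rpow_natCast x 2, ← Real.rpow_add hx]
  norm_num

lemma term_bound (α V vj x1 x0 s : ℝ) (hα : 0 < α) (hs : 0 < s) (hx1 : 0 < x1) (hx0 : 0 < x0)
    (hvj : |vj| ≤ V) :
    |(vj * (x1 ^ (2*α) * (Real.exp (-x1^2/(4*s)) * (x1^2/(4*s^2)))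
          - x0 ^ (2*α) * (Real.exp (-x0^2/(4*s)) * (x0^2/(4*s^2)))) * s ^ (1+α)
      - vj * (x1 ^ (2*α) * Real.exp (-x1^2/(4*s)) - x0 ^ (2*α) * Real.exp (-x0^2/(4*s)))
          * ((1+α) * s ^ α)) / (s ^ (1+α))^2|
    ≤ V * (|x1 ^ (2*α+2) * Real.exp (-x1^2/(4*s)) - x0 ^ (2*α+2) * Real.exp (-x0^2/(4*s))|
            * (s ^ (1+α) / (4*s^2))
          + |x1 ^ (2*α) * Real.exp (-x1^2/(4*s)) - x0 ^ (2*α) * Real.exp (-x0^2/(4*s))|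
            * ((1+α) * s ^ α)) / (s ^ (1+α))^2 := by
  have hP : (0:ℝ) < (s ^ (1+α))^2 := by positivity
  have hV : 0 ≤ V := le_trans (abs_nonneg _) hvj
  set E1 := Real.exp (-x1^2/(4*s)) with hE1
  set E0 := Real.exp (-x0^2/(4*s)) with hE0
  rw [abs_div, abs_of_pos hP]
  gcongr
  have hφ : x1 ^ (2*α) * (E1 * (x1^2/(4*s^2))) - x0 ^ (2*α) * (E0 * (x0^2/(4*s^2)))
      = (x1 ^ (2*α+2) * E1 - x0 ^ (2*α+2) * E0) / (4*s^2) := by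
    rw [← pow_merge hx1 α, ← pow_merge hx0 α]
    field_simp
  refine (abs_sub _ _).trans ?_
  rw [mul_add]
  gcongr ?_ + ?_
  · rw [abs_mul, abs_mul, abs_of_pos (Real.rpow_pos_of_pos hs _), hφ, abs_div,
      abs_of_pos (by positivity : (0:ℝ) < 4*s^2)]
    have h := mul_le_mul_of_nonneg_right
      (mul_le_mul_of_nonneg_right hvj
        (by positivity : (0:ℝ) ≤ |x1 ^ (2*α+2) * E1 - x0 ^ (2*α+2) * E0| / (4*s^2)))
      (by positivity : (0:ℝ) ≤ s ^ (1+α))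
    refine h.trans (le_of_eq (by ring))
  · rw [abs_mul, abs_mul, abs_of_pos (show (0:ℝ) < (1+α)*s^α by positivity)]
    have h := mul_le_mul_of_nonneg_right
      (mul_le_mul_of_nonneg_right hvj (abs_nonneg (x1 ^ (2*α) * E1 - x0 ^ (2*α) * E0)))
      (le_of_lt (show (0:ℝ) < (1+α)*s^α by positivity))
    exact h.trans (le_of_eq (by ring))
theorem stmt_7 (α V : ℝ) (hα0 : 0 < α) (hα1 : α < 1) (hV : 0 < V) :
    ∃ C > 0, ∀ (a v : ℤ → ℝ), (∀ j, 0 < a j) → StrictMono a →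
      (∀ j, |v j| ≤ V) → ∀ N₁ N₂ : ℤ, N₁ < N₂ → ∀ s > (0:ℝ),
      |deriv (fun t : ℝ =>
          (1 / (4 ^ α * Real.Gamma α)) *
            ∑ j ∈ Finset.Icc N₁ N₂,
              v j * ((a (j + 1)) ^ (2 * α) * Real.exp (-(a (j + 1)) ^ 2 / (4 * t)) -
                     (a j) ^ (2 * α) * Real.exp (-(a j) ^ 2 / (4 * t))) / t ^ (1 + α)) s|
        ≤ C / s ^ 2 := by
  have hΓ : 0 < Real.Gamma α := Real.Gamma_pos_of_pos hα0
  have h4α : (0:ℝ) < 4 ^ α := Real.rpow_pos_of_pos (by norm_num) α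
  have hm0 := Mq_pos (show (-1:ℝ) < 2*α-1 by linarith)
  have hm1 := Mq_pos (show (-1:ℝ) < 2*α+1 by linarith)
  have hm3 := Mq_pos (show (-1:ℝ) < 2*α+3 by linarith)
  set c₀ : ℝ := 1 / (4 ^ α * Real.Gamma α) with hc₀_def
  have hc₀ : 0 < c₀ := by positivity
  set Ag : ℝ := 2*α * Mq (2*α-1) + Mq (2*α+1)/2 with hAg_def
  set Aφ : ℝ := (2*α+2) * Mq (2*α+1) + Mq (2*α+3)/2 with hAφ_def
  have hAg : 0 < Ag := add_pos (mul_pos (by linarith) hm0) (by linarith)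
  have hAφ : 0 < Aφ := add_pos (mul_pos (by linarith) hm1) (by linarith)
  refine ⟨c₀ * V * (Aφ/4 + (1+α)*Ag), mul_pos (mul_pos hc₀ hV)
    (add_pos (div_pos hAφ (by norm_num)) (mul_pos (by linarith) hAg)), ?_⟩
  intro a v ha hmono hv N₁ N₂ hN s hs
  have hder : deriv (fun t : ℝ =>
          (1 / (4 ^ α * Real.Gamma α)) *
            ∑ j ∈ Finset.Icc N₁ N₂,
              v j * ((a (j + 1)) ^ (2 * α) * Real.exp (-(a (j + 1)) ^ 2 / (4 * t)) -
                     (a j) ^ (2 * α) * Real.exp (-(a j) ^ 2 / (4 * t))) / t ^ (1 + α)) s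
      = (1 / (4 ^ α * Real.Gamma α)) * ∑ j ∈ Finset.Icc N₁ N₂,
          (v j * ((a (j+1)) ^ (2*α) * (Real.exp (-(a (j+1))^2/(4*s)) * ((a (j+1))^2/(4*s^2)))
                - (a j) ^ (2*α) * (Real.exp (-(a j)^2/(4*s)) * ((a j)^2/(4*s^2)))) * s ^ (1+α)
            - v j * ((a (j+1)) ^ (2*α) * Real.exp (-(a (j+1))^2/(4*s))
                - (a j) ^ (2*α) * Real.exp (-(a j)^2/(4*s))) * ((1+α) * s ^ α))
            / (s ^ (1+α))^2 :=
    ((HasDerivAt.fun_sum (fun j (_ : j ∈ Finset.Icc N₁ N₂) =>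
      hasDerivAt_term α (v j) ((a (j+1)) ^ (2*α)) ((a j) ^ (2*α)) ((a (j+1))^2) ((a j)^2)
        s hs)).const_mul (1 / (4 ^ α * Real.Gamma α))).deriv
  rw [hder]
  -- abbreviations
  have hK1 : (0:ℝ) ≤ s ^ (1+α) / (4*s^2) := by positivity
  have hK2 : (0:ℝ) ≤ (1+α) * s ^ α := by positivity
  have hP : (0:ℝ) < (s ^ (1+α))^2 := by positivity
  -- bound the sum of absolute values
  have hsum : ∑ j ∈ Finset.Icc N₁ N₂,
      |(v j * ((a (j+1)) ^ (2*α) * (Real.exp (-(a (j+1))^2/(4*s)) * ((a (j+1))^2/(4*s^2)))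
            - (a j) ^ (2*α) * (Real.exp (-(a j)^2/(4*s)) * ((a j)^2/(4*s^2)))) * s ^ (1+α)
        - v j * ((a (j+1)) ^ (2*α) * Real.exp (-(a (j+1))^2/(4*s))
            - (a j) ^ (2*α) * Real.exp (-(a j)^2/(4*s))) * ((1+α) * s ^ α))
        / (s ^ (1+α))^2|
      ≤ V * (Aφ/4 + (1+α)*Ag) / s^2 := by
    have hstepA : ∀ j ∈ Finset.Icc N₁ N₂,
        |(v j * ((a (j+1)) ^ (2*α) * (Real.exp (-(a (j+1))^2/(4*s)) * ((a (j+1))^2/(4*s^2)))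
              - (a j) ^ (2*α) * (Real.exp (-(a j)^2/(4*s)) * ((a j)^2/(4*s^2)))) * s ^ (1+α)
          - v j * ((a (j+1)) ^ (2*α) * Real.exp (-(a (j+1))^2/(4*s))
              - (a j) ^ (2*α) * Real.exp (-(a j)^2/(4*s))) * ((1+α) * s ^ α))
          / (s ^ (1+α))^2|
        ≤ V * (|a (j+1) ^ (2*α+2) * Real.exp (-a (j+1)^2/(4*s))
                 - a j ^ (2*α+2) * Real.exp (-a j^2/(4*s))| * (s ^ (1+α) / (4*s^2))
             + |a (j+1) ^ (2*α) * Real.exp (-a (j+1)^2/(4*s))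
                 - a j ^ (2*α) * Real.exp (-a j^2/(4*s))| * ((1+α) * s ^ α))
          / (s ^ (1+α))^2 :=
      fun j _ => term_bound α V (v j) (a (j+1)) (a j) s hα0 hs (ha _) (ha _) (hv j)
    refine (Finset.sum_le_sum hstepA).trans ?_
    rw [← Finset.sum_div, ← Finset.mul_sum, Finset.sum_add_distrib, ← Finset.sum_mul,
      ← Finset.sum_mul]
    have hSφ : ∑ j ∈ Finset.Icc N₁ N₂,
        |a (j+1) ^ (2*α+2) * Real.exp (-a (j+1)^2/(4*s))
          - a j ^ (2*α+2) * Real.exp (-a j^2/(4*s))| ≤ Aφ * s ^ (α+1) := by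
      have h := var_bound (2*α+2) s (by linarith) hs a ha hmono N₁ N₂
      rw [show (2*α+2)-1 = 2*α+1 by ring, show (2*α+2)+1 = 2*α+3 by ring,
        show (2*α+2)/2 = α+1 by ring] at h
      exact h
    have hSg : ∑ j ∈ Finset.Icc N₁ N₂,
        |a (j+1) ^ (2*α) * Real.exp (-a (j+1)^2/(4*s))
          - a j ^ (2*α) * Real.exp (-a j^2/(4*s))| ≤ Ag * s ^ α := by
      have h := var_bound (2*α) s (by linarith) hs a ha hmono N₁ N₂
      rw [show (2*α)/2 = α by ring] at h
      exact h
    have hfinal : V * ((Aφ * s ^ (α+1)) * (s ^ (1+α)/(4*s^2)) + (Ag * s ^ α) * ((1+α) * s ^ α))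
        / (s ^ (1+α))^2 = V * (Aφ/4 + (1+α)*Ag) / s^2 := by
      rw [show s ^ (1+α) = s * s ^ α from by rw [Real.rpow_add hs, Real.rpow_one],
          show s ^ (α+1) = s ^ α * s from by rw [Real.rpow_add hs, Real.rpow_one]]
      have hsα : s ^ α ≠ 0 := (Real.rpow_pos_of_pos hs α).ne'
      field_simp
    rw [← hfinal]
    gcongr
  calc |c₀ * ∑ j ∈ Finset.Icc N₁ N₂,
        (v j * ((a (j+1)) ^ (2*α) * (Real.exp (-(a (j+1))^2/(4*s)) * ((a (j+1))^2/(4*s^2)))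
              - (a j) ^ (2*α) * (Real.exp (-(a j)^2/(4*s)) * ((a j)^2/(4*s^2)))) * s ^ (1+α)
          - v j * ((a (j+1)) ^ (2*α) * Real.exp (-(a (j+1))^2/(4*s))
              - (a j) ^ (2*α) * Real.exp (-(a j)^2/(4*s))) * ((1+α) * s ^ α))
          / (s ^ (1+α))^2|
      = c₀ * |∑ j ∈ Finset.Icc N₁ N₂,
        (v j * ((a (j+1)) ^ (2*α) * (Real.exp (-(a (j+1))^2/(4*s)) * ((a (j+1))^2/(4*s^2)))
              - (a j) ^ (2*α) * (Real.exp (-(a j)^2/(4*s)) * ((a j)^2/(4*s^2)))) * s ^ (1+α)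
          - v j * ((a (j+1)) ^ (2*α) * Real.exp (-(a (j+1))^2/(4*s))
              - (a j) ^ (2*α) * Real.exp (-(a j)^2/(4*s))) * ((1+α) * s ^ α))
          / (s ^ (1+α))^2| := by rw [abs_mul, abs_of_pos hc₀]
    _ ≤ c₀ * (V * (Aφ/4 + (1+α)*Ag) / s^2) :=
        mul_le_mul_of_nonneg_left ((Finset.abs_sum_le_sum_abs _ _).trans hsum) hc₀.le
    _ = c₀ * V * (Aφ/4 + (1+α)*Ag) / s^2 := by ring
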